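/- For every decorated tree T, we have fl(T) = rpath(h_T(T)), where rpath denotes the number of edges on the rightmost path. -/
import Mathlib


/-- Rooted plane trees with integer labels on the leaves. -/
inductive DTree where
  | leaf : ℤ → DTree
  | node : List DTree → DTree

mutual
/-- The list of leaf labels of a tree, in left-to-right (prefix traversal) order. -/
def leafLabels : DTree → List ℤ
  | .leaf l => [l]
  | .node ts => leafLabelsList ts
def leafLabelsList : List DTree → List ℤ
  | [] => []
  | t :: ts => leafLabels t ++ leafLabelsList ts
end

/-- The three conditions of decorated trees, for a subtree whose root is at depth `d`:
leaf labels are at least -1 and strictly less than the depth of their parent;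
every internal node of positive depth `d` has a descendant leaf labeled at most `d - 2`;
and in any direct subtree of an internal node of depth `d`, a leaf labeled `d` is
preceded in traversal order only by leaves labeled at least `d`. -/
inductive DecoAt : DTree → ℕ → Prop where
  | leaf {l : ℤ} {d : ℕ} (h1 : -1 ≤ l) (h2 : l < (d : ℤ) - 1) : DecoAt (.leaf l) d
  | node {ts : List DTree} {d : ℕ} (hne : ts ≠ [])
      (h2 : 0 < d → ∃ x ∈ leafLabelsList ts, x ≤ (d : ℤ) - 2)
      (h3 : ∀ t' ∈ ts, ∀ a b, leafLabels t' = a ++ (d : ℤ) :: b → ∀ x ∈ a, (d : ℤ) ≤ x)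
      (h4 : ∀ t' ∈ ts, DecoAt t' (d + 1)) : DecoAt (.node ts) d

/-- A decorated tree: the root is at depth 0. -/
def IsDeco (T : DTree) : Prop := DecoAt T 0

/-- The number of free leaves (leaves labeled -1). -/
def fl (T : DTree) : ℕ := (leafLabels T).count (-1)

mutual
/-- Increment leaf labels, where the counter `m` is the number of free leaves (from
the left) that still must be incremented; once it reaches 0, remaining free leaves
are left untouched. Returns the new tree and the remaining counter. -/
def incUpTo : DTree → ℕ → DTree × ℕ
  | .leaf l, m =>
      if l = -1 then (if 0 < m then (.leaf 0, m - 1) else (.leaf (-1), m))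
      else (.leaf (l + 1), m)
  | .node ts, m =>
      let p := incList ts m
      (.node p.1, p.2)
def incList : List DTree → ℕ → List DTree × ℕ
  | [], m => ([], m)
  | t :: ts, m =>
      let p := incUpTo t m
      let q := incList ts p.2
      (p.1 :: q.1, q.2)
end

/-- Δ_T(T,i): attach `T` under a new root vertex and add 1 to every leaf label,
except for the last `i` free leaves (in traversal order). -/
def deltaT (T : DTree) (i : ℕ) : DTree := .node [(incUpTo T (fl T - i)).1]

mutual
/-- Subtract 1 from every non-free leaf label. -/
def decLeaves : DTree → DTree
  | .leaf l => if l = -1 then .leaf (-1) else .leaf (l - 1)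
  | .node ts => .node (decList ts)
def decList : List DTree → List DTree
  | [] => []
  | t :: ts => decLeaves t :: decList ts
end

/-- Π_T: remove the root (which has a unique child) and subtract 1 from every
non-free leaf label. -/
def piT : DTree → DTree
  | .node [t] => decLeaves t
  | t => t

/-- ⊕_T(T1,i,T2): identify the roots of Δ_T(T1,i) and T2, with the subtrees of
Δ_T(T1,i) placed to the left. -/
def oplusT (T1 : DTree) (i : ℕ) (T2 : DTree) : DTree :=
  match deltaT T1 i, T2 with
  | .node a, .node b => .node (a ++ b)
  | _, _ => deltaT T1 i

mutual
/-- Attach a free leaf as rightmost child of the `i`-th node on the rightmost path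
(the root being the first node of the rightmost path). -/
def attachR : DTree → ℕ → DTree
  | .leaf _, _ => .leaf (-1)
  | .node ts, i =>
      if i ≤ 1 then .node (ts ++ [.leaf (-1)])
      else .node (attachRLast ts (i - 1))
def attachRLast : List DTree → ℕ → List DTree
  | [], _ => []
  | [t], i => [attachR t i]
  | t :: ts, i => t :: attachRLast ts i
end

mutual
/-- Attach a free leaf below the rightmost leaf, which becomes an internal node. -/
def growR : DTree → DTree
  | .leaf _ => .node [.leaf (-1)]
  | .node ts => .node (growRLast ts)
def growRLast : List DTree → List DTree
  | [] => []
  | [t] => [growR t]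
  | t :: ts => t :: growRLast ts
end

mutual
/-- The number of edges on the rightmost path (from the root to the rightmost leaf). -/
def rpath : DTree → ℕ
  | .leaf _ => 0
  | .node ts => rpathLast ts
def rpathLast : List DTree → ℕ
  | [] => 0
  | [t] => rpath t + 1
  | _ :: ts => rpathLast ts
end

mutual
/-- Add `r` to every leaf label. -/
def addAll (r : ℤ) : DTree → DTree
  | .leaf l => .leaf (l + r)
  | .node ts => .node (addAllList r ts)
def addAllList (r : ℤ) : List DTree → List DTree
  | [] => []
  | t :: ts => addAll r t :: addAllList r ts
end

mutual
/-- Add `r` to every leaf label except the rightmost leaf. -/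
def addExceptLast (r : ℤ) : DTree → DTree
  | .leaf l => .leaf l
  | .node ts => .node (addExceptLastList r ts)
def addExceptLastList (r : ℤ) : List DTree → List DTree
  | [] => []
  | [t] => [addExceptLast r t]
  | t :: ts => addAll r t :: addExceptLastList r ts
end

mutual
/-- Replace the rightmost leaf by the tree `repl`. -/
def replaceR (repl : DTree) : DTree → DTree
  | .leaf _ => repl
  | .node ts => .node (replaceRList repl ts)
def replaceRList (repl : DTree) : List DTree → List DTree
  | [] => []
  | [t] => [replaceR repl t]
  | t :: ts => t :: replaceRList repl ts
end

/-- The involution h_T on decorated trees, as a relation, following its recursive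
definition on the four structural types of decorated trees. -/
inductive HT : DTree → DTree → Prop where
  /-- Type I: the one-leaf tree is fixed. -/
  | base : HT (.node [.leaf (-1)]) (.node [.leaf (-1)])
  /-- Type II: `T = Δ_T(T', i)`; attach a free leaf as rightmost child of the `i`-th
  node on the rightmost path of `h_T(T')`. -/
  | typeII {T' U' : DTree} {i : ℕ} (h1 : 1 ≤ i) (h2 : i ≤ fl T') (h : HT T' U') :
      HT (deltaT T' i) (attachR U' i)
  /-- Type III: `T` is a free leaf attached as leftmost child of the root of `T'`;
  attach a free leaf below the rightmost leaf of `h_T(T')`. -/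
  | typeIII {ts : List DTree} {U' : DTree} (hne : ts ≠ []) (h : HT (.node ts) U') :
      HT (.node (.leaf (-1) :: ts)) (growR U')
  /-- Type IV: `T = ⊕_T(T1, i, T2)`; replace the rightmost leaf of `h_T(T2)` by
  `h_T(Δ_T(T1, i))` with all leaf labels except the rightmost one increased by
  `rpath (h_T(T2))`. -/
  | typeIV {T1 T2 U1 U2 : DTree} {i : ℕ} (h1 : 1 ≤ i) (h2 : i ≤ fl T1)
      (hA : HT (deltaT T1 i) U1) (hB : HT T2 U2) :
      HT (oplusT T1 i T2) (replaceR (addExceptLast (rpath U2 : ℤ) U1) U2)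

/-! ### Auxiliary machinery -/

/-- All node lists nonempty. -/
inductive NE : DTree → Prop where
  | leaf (l : ℤ) : NE (.leaf l)
  | node (ts : List DTree) (hne : ts ≠ []) (h : ∀ t ∈ ts, NE t) : NE (.node ts)

theorem rpathLast_cons (a : DTree) (l : List DTree) (h : l ≠ []) :
    rpathLast (a :: l) = rpathLast l := by
  cases l with
  | nil => exact absurd rfl h
  | cons b bs => simp [rpathLast]

theorem rpathLast_pos : ∀ (ts : List DTree), ts ≠ [] → 1 ≤ rpathLast ts
  | [t], _ => by simp [rpathLast]
  | t :: t' :: ts, _ => by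
      rw [rpathLast_cons _ _ (by simp)]
      exact rpathLast_pos (t' :: ts) (by simp)

theorem rpathLast_append (xs : List DTree) (t : DTree) :
    rpathLast (xs ++ [t]) = rpath t + 1 := by
  induction xs with
  | nil => simp [rpathLast]
  | cons x xs ih => rw [List.cons_append, rpathLast_cons _ _ (by simp), ih]

theorem growRLast_length : ∀ ts : List DTree, (growRLast ts).length = ts.length
  | [] => rfl
  | [t] => rfl
  | t :: t' :: ts => by
      simp only [growRLast, List.length_cons]
      rw [growRLast_length (t' :: ts)]; simp

theorem replaceRList_length (repl : DTree) :
    ∀ ts : List DTree, (replaceRList repl ts).length = ts.length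
  | [] => rfl
  | [t] => rfl
  | t :: t' :: ts => by
      simp only [replaceRList, List.length_cons]
      rw [replaceRList_length repl (t' :: ts)]; simp

theorem attachRLast_length (j : ℕ) :
    ∀ ts : List DTree, (attachRLast ts j).length = ts.length
  | [] => rfl
  | [t] => rfl
  | t :: t' :: ts => by
      simp only [attachRLast, List.length_cons]
      rw [attachRLast_length j (t' :: ts)]; simp

theorem addExceptLastList_length (r : ℤ) :
    ∀ ts : List DTree, (addExceptLastList r ts).length = ts.length
  | [] => rfl
  | [t] => rfl
  | t :: t' :: ts => by
      simp only [addExceptLastList, List.length_cons]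
      rw [addExceptLastList_length r (t' :: ts)]; simp

theorem addAllList_length (r : ℤ) :
    ∀ ts : List DTree, (addAllList r ts).length = ts.length
  | [] => rfl
  | t :: ts => by
      simp only [addAllList, List.length_cons]
      rw [addAllList_length r ts]

mutual
theorem attachR_rpath : ∀ (t : DTree) (i : ℕ), 1 ≤ i → i ≤ rpath t →
    rpath (attachR t i) = i
  | .leaf l, i, h1, h2 => by simp [rpath] at h2; omega
  | .node ts, i, h1, h2 => by
      by_cases hi : i ≤ 1
      · have hi1 : i = 1 := by omega
        subst hi1
        simp [attachR, rpath, rpathLast_append]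
      · have h2' : i ≤ rpathLast ts := by simpa [rpath] using h2
        rw [attachR, if_neg hi]
        show rpathLast (attachRLast ts (i - 1)) = i
        rw [attachRLast_rpath ts (i - 1) (by omega) (by omega)]
        omega
theorem attachRLast_rpath : ∀ (ts : List DTree) (j : ℕ), 1 ≤ j → j + 1 ≤ rpathLast ts →
    rpathLast (attachRLast ts j) = j + 1
  | [], j, h1, h2 => by simp [rpathLast] at h2
  | [t], j, h1, h2 => by
      have ht : j ≤ rpath t := by simp [rpathLast] at h2; omega
      simp only [attachRLast]
      show rpath (attachR t j) + 1 = j + 1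
      rw [attachR_rpath t j h1 ht]
  | t :: t' :: ts, j, h1, h2 => by
      simp only [attachRLast]
      rw [rpathLast_cons _ _ (by
        intro hc
        have := attachRLast_length j (t' :: ts)
        rw [hc] at this
        simp at this)]
      rw [rpathLast_cons _ _ (by simp)] at h2
      exact attachRLast_rpath (t' :: ts) j h1 h2
end

mutual
theorem growR_rpath : ∀ t : DTree, NE t → rpath (growR t) = rpath t + 1
  | .leaf l, _ => by simp [growR, rpath, rpathLast]
  | .node ts, h => by
      rcases h with _ | ⟨_, hne, hall⟩
      show rpathLast (growRLast ts) = rpathLast ts + 1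
      exact growRLast_rpath ts hne hall
theorem growRLast_rpath : ∀ ts : List DTree, ts ≠ [] → (∀ t ∈ ts, NE t) →
    rpathLast (growRLast ts) = rpathLast ts + 1
  | [t], _, h => by
      simp only [growRLast]
      show rpath (growR t) + 1 = rpathLast [t] + 1
      rw [growR_rpath t (h t (by simp))]
      simp [rpathLast]
  | t :: t' :: ts, _, h => by
      simp only [growRLast]
      rw [rpathLast_cons _ _ (by
        intro hc
        have := growRLast_length (t' :: ts)
        rw [hc] at this
        simp at this)]
      rw [rpathLast_cons _ _ (by simp)]
      exact growRLast_rpath (t' :: ts) (by simp) (fun x hx => h x (by simp [hx]))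
end

mutual
theorem replaceR_rpath (repl : DTree) : ∀ t : DTree, NE t →
    rpath (replaceR repl t) = rpath t + rpath repl
  | .leaf l, _ => by simp [replaceR, rpath]
  | .node ts, h => by
      rcases h with _ | ⟨_, hne, hall⟩
      show rpathLast (replaceRList repl ts) = rpathLast ts + rpath repl
      exact replaceRList_rpath repl ts hne hall
theorem replaceRList_rpath (repl : DTree) : ∀ ts : List DTree, ts ≠ [] → (∀ t ∈ ts, NE t) →
    rpathLast (replaceRList repl ts) = rpathLast ts + rpath repl
  | [t], _, h => by
      simp only [replaceRList]
      show rpath (replaceR repl t) + 1 = rpathLast [t] + rpath repl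
      rw [replaceR_rpath repl t (h t (by simp))]
      simp [rpathLast]; omega
  | t :: t' :: ts, _, h => by
      simp only [replaceRList]
      rw [rpathLast_cons _ _ (by
        intro hc
        have := replaceRList_length repl (t' :: ts)
        rw [hc] at this
        simp at this)]
      rw [rpathLast_cons _ _ (by simp)]
      exact replaceRList_rpath repl (t' :: ts) (by simp) (fun x hx => h x (by simp [hx]))
end

mutual
theorem addExceptLast_rpath (r : ℤ) : ∀ t : DTree,
    rpath (addExceptLast r t) = rpath t
  | .leaf l => by simp [addExceptLast, rpath]
  | .node ts => by
      show rpathLast (addExceptLastList r ts) = rpathLast ts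
      exact addExceptLastList_rpath r ts
theorem addExceptLastList_rpath (r : ℤ) : ∀ ts : List DTree,
    rpathLast (addExceptLastList r ts) = rpathLast ts
  | [] => rfl
  | [t] => by
      simp only [addExceptLastList]
      show rpath (addExceptLast r t) + 1 = rpathLast [t]
      rw [addExceptLast_rpath r t]; simp [rpathLast]
  | t :: t' :: ts => by
      simp only [addExceptLastList]
      rw [rpathLast_cons _ _ (by
        intro hc
        have := addExceptLastList_length r (t' :: ts)
        rw [hc] at this
        simp at this)]
      rw [rpathLast_cons _ _ (by simp)]
      exact addExceptLastList_rpath r (t' :: ts)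
end

/-! NE preservation -/

mutual
theorem attachR_NE : ∀ (t : DTree) (i : ℕ), NE t → NE (attachR t i)
  | .leaf l, i, _ => by rw [attachR]; exact NE.leaf _
  | .node ts, i, h => by
      rcases h with _ | ⟨_, hne, hall⟩
      by_cases hi : i ≤ 1
      · rw [attachR, if_pos hi]
        refine NE.node _ (by simp) ?_
        intro t ht
        rcases List.mem_append.1 ht with h' | h'
        · exact hall t h'
        · simp at h'; subst h'; exact NE.leaf _
      · rw [attachR, if_neg hi]
        refine NE.node _ ?_ (attachRLast_NE ts (i-1) hall)
        intro hc
        have := attachRLast_length (i-1) ts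
        rw [hc] at this
        rcases ts with _ | ⟨a, as⟩
        · exact hne rfl
        · simp at this
theorem attachRLast_NE : ∀ (ts : List DTree) (j : ℕ), (∀ t ∈ ts, NE t) →
    ∀ x ∈ attachRLast ts j, NE x
  | [], j, h => by simp [attachRLast]
  | [t], j, h => by
      simp only [attachRLast]
      intro x hx
      simp at hx; subst hx
      exact attachR_NE t j (h t (by simp))
  | t :: t' :: ts, j, h => by
      simp only [attachRLast]
      intro x hx
      rcases List.mem_cons.1 hx with rfl | hx'
      · exact h x (by simp)
      · exact attachRLast_NE (t' :: ts) j (fun a ha => h a (by simp [ha])) x hx'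
end

mutual
theorem growR_NE : ∀ t : DTree, NE t → NE (growR t)
  | .leaf l, _ => by
      rw [growR]
      exact NE.node _ (by simp) (by intro x hx; simp at hx; subst hx; exact NE.leaf _)
  | .node ts, h => by
      rcases h with _ | ⟨_, hne, hall⟩
      rw [growR]
      refine NE.node _ ?_ (growRLast_NE ts hall)
      intro hc
      have := growRLast_length ts
      rw [hc] at this
      rcases ts with _ | ⟨a, as⟩
      · exact hne rfl
      · simp at this
theorem growRLast_NE : ∀ ts : List DTree, (∀ t ∈ ts, NE t) → ∀ x ∈ growRLast ts, NE x
  | [], h => by simp [growRLast]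
  | [t], h => by
      simp only [growRLast]
      intro x hx; simp at hx; subst hx
      exact growR_NE t (h t (by simp))
  | t :: t' :: ts, h => by
      simp only [growRLast]
      intro x hx
      rcases List.mem_cons.1 hx with rfl | hx'
      · exact h x (by simp)
      · exact growRLast_NE (t' :: ts) (fun a ha => h a (by simp [ha])) x hx'
end

mutual
theorem replaceR_NE (repl : DTree) (hr : NE repl) : ∀ t : DTree, NE t → NE (replaceR repl t)
  | .leaf l, _ => by rw [replaceR]; exact hr
  | .node ts, h => by
      rcases h with _ | ⟨_, hne, hall⟩
      rw [replaceR]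
      refine NE.node _ ?_ (replaceRList_NE repl hr ts hall)
      intro hc
      have := replaceRList_length repl ts
      rw [hc] at this
      rcases ts with _ | ⟨a, as⟩
      · exact hne rfl
      · simp at this
theorem replaceRList_NE (repl : DTree) (hr : NE repl) : ∀ ts : List DTree,
    (∀ t ∈ ts, NE t) → ∀ x ∈ replaceRList repl ts, NE x
  | [], h => by simp [replaceRList]
  | [t], h => by
      simp only [replaceRList]
      intro x hx; simp at hx; subst hx
      exact replaceR_NE repl hr t (h t (by simp))
  | t :: t' :: ts, h => by
      simp only [replaceRList]
      intro x hx
      rcases List.mem_cons.1 hx with rfl | hx'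
      · exact h x (by simp)
      · exact replaceRList_NE repl hr (t' :: ts) (fun a ha => h a (by simp [ha])) x hx'
end

mutual
theorem addAll_NE (r : ℤ) : ∀ t : DTree, NE t → NE (addAll r t)
  | .leaf l, _ => by rw [addAll]; exact NE.leaf _
  | .node ts, h => by
      rcases h with _ | ⟨_, hne, hall⟩
      rw [addAll]
      refine NE.node _ ?_ (addAllList_NE r ts hall)
      intro hc
      have := addAllList_length r ts
      rw [hc] at this
      rcases ts with _ | ⟨a, as⟩
      · exact hne rfl
      · simp at this
theorem addAllList_NE (r : ℤ) : ∀ ts : List DTree, (∀ t ∈ ts, NE t) →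
    ∀ x ∈ addAllList r ts, NE x
  | [], h => by simp [addAllList]
  | t :: ts, h => by
      simp only [addAllList]
      intro x hx
      rcases List.mem_cons.1 hx with rfl | hx'
      · exact addAll_NE r t (h t (by simp))
      · exact addAllList_NE r ts (fun a ha => h a (by simp [ha])) x hx'
end

mutual
theorem addExceptLast_NE (r : ℤ) : ∀ t : DTree, NE t → NE (addExceptLast r t)
  | .leaf l, _ => by rw [addExceptLast]; exact NE.leaf _
  | .node ts, h => by
      rcases h with _ | ⟨_, hne, hall⟩
      rw [addExceptLast]
      refine NE.node _ ?_ (addExceptLastList_NE r ts hall)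
      intro hc
      have := addExceptLastList_length r ts
      rw [hc] at this
      rcases ts with _ | ⟨a, as⟩
      · exact hne rfl
      · simp at this
theorem addExceptLastList_NE (r : ℤ) : ∀ ts : List DTree, (∀ t ∈ ts, NE t) →
    ∀ x ∈ addExceptLastList r ts, NE x
  | [], h => by simp [addExceptLastList]
  | [t], h => by
      simp only [addExceptLastList]
      intro x hx; simp at hx; subst hx
      exact addExceptLast_NE r t (h t (by simp))
  | t :: t' :: ts, h => by
      simp only [addExceptLastList]
      intro x hx
      rcases List.mem_cons.1 hx with rfl | hx'
      · exact addAll_NE r t (h t (by simp))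
      · exact addExceptLastList_NE r (t' :: ts) (fun a ha => h a (by simp [ha])) x hx'
end

/-! incUpTo counting -/

mutual
theorem incUpTo_count : ∀ (t : DTree) (m : ℕ), (∀ x ∈ leafLabels t, -1 ≤ x) →
    (leafLabels (incUpTo t m).1).count (-1) = (leafLabels t).count (-1) - m ∧
    (incUpTo t m).2 = m - (leafLabels t).count (-1) ∧
    (∀ x ∈ leafLabels (incUpTo t m).1, -1 ≤ x)
  | .leaf l, m, h => by
      by_cases hl : l = -1
      · subst hl
        by_cases hm : 0 < m
        · rw [incUpTo, if_pos rfl, if_pos hm]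
          have hm1 : 1 ≤ m := hm
          refine ⟨?_, ?_, ?_⟩
          · simp only [leafLabels]
            norm_num
            omega
          · simp only [leafLabels]
            norm_num
          · simp [leafLabels]
        · have hm0 : m = 0 := by omega
          subst hm0
          rw [incUpTo, if_pos rfl, if_neg hm]
          refine ⟨?_, ?_, ?_⟩
          · simp [leafLabels]
          · simp [leafLabels]
          · simp [leafLabels]
      · have hge : -1 ≤ l := h l (by simp [leafLabels])
        rw [incUpTo, if_neg hl]
        refine ⟨?_, ?_, ?_⟩
        · have h1 : l + 1 ≠ -1 := by omega
          simp [leafLabels, List.count_singleton, hl, h1]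
        · simp [leafLabels, List.count_singleton, hl]
        · simp [leafLabels]; omega
  | .node ts, m, h => by
      have h' : ∀ x ∈ leafLabelsList ts, -1 ≤ x := by
        intro x hx; exact h x (by simpa [leafLabels] using hx)
      have := incList_count ts m h'
      rw [incUpTo]
      simpa [leafLabels] using this
theorem incList_count : ∀ (ts : List DTree) (m : ℕ), (∀ x ∈ leafLabelsList ts, -1 ≤ x) →
    (leafLabelsList (incList ts m).1).count (-1) = (leafLabelsList ts).count (-1) - m ∧
    (incList ts m).2 = m - (leafLabelsList ts).count (-1) ∧
    (∀ x ∈ leafLabelsList (incList ts m).1, -1 ≤ x)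
  | [], m, h => by
      rw [incList]
      simp [leafLabelsList]
  | t :: ts, m, h => by
      have ht : ∀ x ∈ leafLabels t, -1 ≤ x := by
        intro x hx; exact h x (by simp [leafLabelsList, hx])
      obtain ⟨c1, s1, g1⟩ := incUpTo_count t m ht
      have hts : ∀ x ∈ leafLabelsList ts, -1 ≤ x := by
        intro x hx; exact h x (by simp [leafLabelsList, hx])
      obtain ⟨c2, s2, g2⟩ := incList_count ts (incUpTo t m).2 hts
      rw [incList]
      simp only [leafLabelsList, List.count_append]
      refine ⟨?_, ?_, ?_⟩
      · rw [c1, c2, s1]; omega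
      · rw [s2, s1]; omega
      · intro x hx
        rcases List.mem_append.1 hx with hx' | hx'
        · exact g1 x hx'
        · exact g2 x hx'
end

theorem leafLabelsList_append : ∀ a b : List DTree,
    leafLabelsList (a ++ b) = leafLabelsList a ++ leafLabelsList b
  | [], b => by simp [leafLabelsList]
  | t :: ts, b => by
      show leafLabels t ++ leafLabelsList (ts ++ b) =
        (leafLabels t ++ leafLabelsList ts) ++ leafLabelsList b
      rw [leafLabelsList_append ts b, List.append_assoc]

theorem fl_deltaT (T : DTree) (i : ℕ) (hGe : ∀ x ∈ leafLabels T, -1 ≤ x)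
    (hi : i ≤ fl T) : fl (deltaT T i) = i := by
  obtain ⟨c, -, -⟩ := incUpTo_count T (fl T - i) hGe
  have h0 : fl (deltaT T i) = (leafLabels (incUpTo T (fl T - i)).1).count (-1) := by
    simp [deltaT, fl, leafLabels, leafLabelsList]
  have h1 : fl T = (leafLabels T).count (-1) := rfl
  rw [h0, c]
  omega

theorem Ge_deltaT (T : DTree) (i : ℕ) (hGe : ∀ x ∈ leafLabels T, -1 ≤ x) :
    ∀ x ∈ leafLabels (deltaT T i), -1 ≤ x := by
  obtain ⟨-, -, g⟩ := incUpTo_count T (fl T - i) hGe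
  intro x hx
  apply g
  simpa [deltaT, leafLabels, leafLabelsList] using hx

theorem HT_main : ∀ T U : DTree, HT T U →
    (∃ ts, T = .node ts) ∧ (∀ x ∈ leafLabels T, -1 ≤ x) ∧ 1 ≤ fl T ∧
    NE U ∧ (∃ us, us ≠ [] ∧ U = .node us) ∧ fl T = rpath U := by
  intro T U h
  induction h with
  | base =>
      refine ⟨⟨_, rfl⟩, ?_, ?_, ?_, ⟨[.leaf (-1)], by simp, rfl⟩, ?_⟩
      · simp [leafLabels, leafLabelsList]
      · simp [fl, leafLabels, leafLabelsList]
      · exact NE.node _ (by simp) (by intro x hx; simp at hx; subst hx; exact NE.leaf _)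
      · simp [fl, leafLabels, leafLabelsList, rpath, rpathLast]
  | @typeII T' U' i h1 h2 h ih =>
      obtain ⟨-, hGe, hfl, hNE, ⟨us, husne, hU⟩, heq⟩ := ih
      have hflD : fl (deltaT T' i) = i := fl_deltaT T' i hGe h2
      have hrp : rpath (attachR U' i) = i := by
        refine attachR_rpath U' i h1 ?_
        omega
      refine ⟨⟨_, rfl⟩, Ge_deltaT T' i hGe, by omega, attachR_NE U' i hNE, ?_, by omega⟩
      subst hU
      by_cases hi : i ≤ 1
      · exact ⟨us ++ [.leaf (-1)], by simp, by rw [attachR, if_pos hi]⟩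
      · refine ⟨attachRLast us (i - 1), ?_, by rw [attachR, if_neg hi]⟩
        intro hc
        have := attachRLast_length (i - 1) us
        rw [hc] at this
        rcases us with _ | ⟨a, as⟩
        · exact husne rfl
        · simp at this
  | @typeIII ts U' hne h ih =>
      obtain ⟨-, hGe, hfl, hNE, ⟨us, husne, hU⟩, heq⟩ := ih
      have hll : leafLabels (DTree.node (.leaf (-1) :: ts)) = (-1) :: leafLabelsList ts := by
        simp [leafLabels, leafLabelsList]
      have hfl' : fl (DTree.node (.leaf (-1) :: ts)) = fl (DTree.node ts) + 1 := by
        simp [fl, leafLabels, leafLabelsList, List.count_cons]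
      have hrp : rpath (growR U') = rpath U' + 1 := growR_rpath U' hNE
      refine ⟨⟨_, rfl⟩, ?_, by omega, growR_NE U' hNE, ?_, by omega⟩
      · intro x hx
        rw [hll] at hx
        rcases List.mem_cons.1 hx with rfl | hx'
        · norm_num
        · exact hGe x (by simpa [leafLabels] using hx')
      · subst hU
        refine ⟨growRLast us, ?_, by rw [growR]⟩
        intro hc
        have := growRLast_length us
        rw [hc] at this
        rcases us with _ | ⟨a, as⟩
        · exact husne rfl
        · simp at this
  | @typeIV T1 T2 U1 U2 i h1 h2 hA hB ihA ihB =>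
      obtain ⟨-, hGeA, hflA, hNE1, ⟨us1, hus1ne, hU1⟩, heqA⟩ := ihA
      obtain ⟨⟨bs, hT2⟩, hGeB, hflB, hNE2, ⟨us2, hus2ne, hU2⟩, heqB⟩ := ihB
      subst hT2
      have hop : oplusT T1 i (DTree.node bs) =
          DTree.node ([(incUpTo T1 (fl T1 - i)).1] ++ bs) := rfl
      have hllT : leafLabels (oplusT T1 i (DTree.node bs)) =
          leafLabels (deltaT T1 i) ++ leafLabels (DTree.node bs) := by
        rw [hop]
        simp [leafLabels, leafLabelsList_append, deltaT, leafLabelsList]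
      have hflT : fl (oplusT T1 i (DTree.node bs)) =
          fl (deltaT T1 i) + fl (DTree.node bs) := by
        simp [fl, hllT, List.count_append]
      have hrepl : NE (addExceptLast (rpath U2 : ℤ) U1) :=
        addExceptLast_NE _ U1 hNE1
      have hrp : rpath (replaceR (addExceptLast (rpath U2 : ℤ) U1) U2) =
          rpath U2 + rpath U1 := by
        rw [replaceR_rpath _ U2 hNE2, addExceptLast_rpath]
      refine ⟨⟨_, hop⟩, ?_, by omega, replaceR_NE _ hrepl U2 hNE2, ?_, by omega⟩
      · intro x hx
        rw [hllT] at hx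
        rcases List.mem_append.1 hx with hx' | hx'
        · exact hGeA x hx'
        · exact hGeB x hx'
      · subst hU2
        refine ⟨replaceRList _ us2, ?_, by rw [replaceR]⟩
        intro hc
        have := replaceRList_length (addExceptLast (rpath (DTree.node us2) : ℤ) U1) us2
        rw [hc] at this
        rcases us2 with _ | ⟨a, as⟩
        · exact hus2ne rfl
        · simp at this

theorem stmt16 (T U : DTree) (hT : IsDeco T) (h : HT T U) : fl T = rpath U := by
  exact (HT_main T U h).2.2.2.2.2
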